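/- Let α₀, α₁ ∈ ℝ, β₁ > 0, β₂ > 0, and ω > 0. Set z := (ω² − α₀) − i·α₁ω ∈ ℂ and A := |z| = √((ω² − α₀)² + α₁²ω²). Assume A > 0 and |β₁ − β₂| ≤ A ≤ β₁ + β₂ (so both arccos arguments below lie in [−1, 1]). Then the delays τ₁ := (−arg z − arccos((β₁² + A² − β₂²)/(2β₁A)))/ω and τ₂ := (−arg z + arccos((β₂² + A² − β₁²)/(2β₂A)))/ω satisfy χ(iω) = 0, where arg denotes the principal argument. Thus for every frequency ω satisfying the triangle condition there is an explicit parametric solution (τ₁(ω), τ₂(ω)) on the critical (Hopf) curve. -/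

import Mathlib

/-- The characteristic function `χ(λ) = λ² + α₁λ + α₀ + β₁·exp(−λτ₁) + β₂·exp(−λτ₂)`
of the linearized two-delay glucose–insulin model. -/
noncomputable def chi (α₀ α₁ β₁ β₂ τ₁ τ₂ : ℝ) (lam : ℂ) : ℂ :=
  lam ^ 2 + (α₁ : ℂ) * lam + (α₀ : ℂ) + (β₁ : ℂ) * Complex.exp (-lam * (τ₁ : ℂ))
    + (β₂ : ℂ) * Complex.exp (-lam * (τ₂ : ℂ))

/-- For every frequency `ω > 0` satisfying the triangle condition
`|β₁ − β₂| ≤ A ≤ β₁ + β₂` with `A = |z|`, `z = (ω² − α₀) − iα₁ω`, the explicit delays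
`τ₁ = (−arg z − arccos((β₁² + A² − β₂²)/(2β₁A)))/ω` and
`τ₂ = (−arg z + arccos((β₂² + A² − β₁²)/(2β₂A)))/ω` give a purely imaginary
characteristic root: `χ(iω) = 0`. -/
theorem stmt1 (α₀ α₁ β₁ β₂ ω : ℝ) (hβ₁ : 0 < β₁) (hβ₂ : 0 < β₂) (hω : 0 < ω)
    (z : ℂ) (hz : z = ((ω ^ 2 - α₀ : ℝ) : ℂ) - Complex.I * ((α₁ * ω : ℝ) : ℂ))
    (A : ℝ) (hA : A = ‖z‖) (hApos : 0 < A)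
    (htri₁ : |β₁ - β₂| ≤ A) (htri₂ : A ≤ β₁ + β₂)
    (τ₁ τ₂ : ℝ)
    (hτ₁ : τ₁ = (-z.arg - Real.arccos ((β₁ ^ 2 + A ^ 2 - β₂ ^ 2) / (2 * β₁ * A))) / ω)
    (hτ₂ : τ₂ = (-z.arg + Real.arccos ((β₂ ^ 2 + A ^ 2 - β₁ ^ 2) / (2 * β₂ * A))) / ω) :
    chi α₀ α₁ β₁ β₂ τ₁ τ₂ (Complex.I * (ω : ℂ)) = 0 := by
  have hωne : (ω : ℝ) ≠ 0 := ne_of_gt hω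
  have hβ₁ne : β₁ ≠ 0 := ne_of_gt hβ₁
  have hβ₂ne : β₂ ≠ 0 := ne_of_gt hβ₂
  have hAne : A ≠ 0 := ne_of_gt hApos
  set c₁ : ℝ := (β₁ ^ 2 + A ^ 2 - β₂ ^ 2) / (2 * β₁ * A) with hc₁def
  set c₂ : ℝ := (β₂ ^ 2 + A ^ 2 - β₁ ^ 2) / (2 * β₂ * A) with hc₂def
  have habs := abs_le.mp htri₁
  have hc₁l : -1 ≤ c₁ := by
    rw [hc₁def, le_div_iff₀ (by positivity)]
    nlinarith [habs.1, habs.2]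
  have hc₁u : c₁ ≤ 1 := by
    rw [hc₁def, div_le_one (by positivity)]
    nlinarith [habs.1, habs.2]
  have hc₂l : -1 ≤ c₂ := by
    rw [hc₂def, le_div_iff₀ (by positivity)]
    nlinarith [habs.1, habs.2]
  have hc₂u : c₂ ≤ 1 := by
    rw [hc₂def, div_le_one (by positivity)]
    nlinarith [habs.1, habs.2]
  set θ₁ : ℝ := Real.arccos c₁ with hθ₁
  set θ₂ : ℝ := Real.arccos c₂ with hθ₂
  have hcos₁ : Real.cos θ₁ = c₁ := Real.cos_arccos hc₁l hc₁u
  have hcos₂ : Real.cos θ₂ = c₂ := Real.cos_arccos hc₂l hc₂u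
  have hsin₁ : Real.sin θ₁ = Real.sqrt (1 - c₁ ^ 2) := Real.sin_arccos c₁
  have hsin₂ : Real.sin θ₂ = Real.sqrt (1 - c₂ ^ 2) := Real.sin_arccos c₂
  -- key imaginary-part identity
  have hsq : β₁ ^ 2 * (1 - c₁ ^ 2) = β₂ ^ 2 * (1 - c₂ ^ 2) := by
    rw [hc₁def, hc₂def]
    field_simp
    ring
  have hsineq : β₁ * Real.sin θ₁ = β₂ * Real.sin θ₂ := by
    rw [hsin₁, hsin₂]
    have h1 : β₁ * Real.sqrt (1 - c₁ ^ 2) = Real.sqrt (β₁ ^ 2 * (1 - c₁ ^ 2)) := by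
      rw [Real.sqrt_mul (sq_nonneg β₁), Real.sqrt_sq hβ₁.le]
    have h2 : β₂ * Real.sqrt (1 - c₂ ^ 2) = Real.sqrt (β₂ ^ 2 * (1 - c₂ ^ 2)) := by
      rw [Real.sqrt_mul (sq_nonneg β₂), Real.sqrt_sq hβ₂.le]
    rw [h1, h2, hsq]
  have hcoseq : β₁ * Real.cos θ₁ + β₂ * Real.cos θ₂ = A := by
    rw [hcos₁, hcos₂, hc₁def, hc₂def]
    field_simp
    ring
  -- key complex identity
  have key : (β₁ : ℂ) * Complex.exp ((θ₁ : ℂ) * Complex.I)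
      + (β₂ : ℂ) * Complex.exp ((-θ₂ : ℂ) * Complex.I) = (A : ℂ) := by
    rw [Complex.exp_mul_I, Complex.exp_mul_I]
    have hc : Complex.cos (-θ₂ : ℂ) = Complex.cos (θ₂ : ℂ) := by
      simp [Complex.cos_neg]
    have hs : Complex.sin (-θ₂ : ℂ) = -Complex.sin (θ₂ : ℂ) := by
      simp [Complex.sin_neg]
    rw [hc, hs]
    apply Complex.ext <;>
      simp [Complex.add_re, Complex.add_im, Complex.mul_re, Complex.mul_im,
        Complex.cos_ofReal_re, Complex.sin_ofReal_re, Complex.cos_ofReal_im,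
        Complex.sin_ofReal_im]
    · linarith [hcoseq]
    · linarith [hsineq]
  -- rewrite the exponents
  have hωC : (ω : ℂ) ≠ 0 := by exact_mod_cast hωne
  have e₁ : -(Complex.I * (ω : ℂ)) * (τ₁ : ℂ)
      = (z.arg : ℂ) * Complex.I + (θ₁ : ℂ) * Complex.I := by
    rw [hτ₁]
    push_cast
    field_simp [hωC]
    ring
  have e₂ : -(Complex.I * (ω : ℂ)) * (τ₂ : ℂ)
      = (z.arg : ℂ) * Complex.I + (-θ₂ : ℂ) * Complex.I := by
    rw [hτ₂]
    push_cast
    field_simp [hωC]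
    ring
  have hzz : (A : ℂ) * Complex.exp ((z.arg : ℂ) * Complex.I) = z := by
    rw [hA]; exact Complex.norm_mul_exp_arg_mul_I z
  have hneg : (Complex.I * (ω : ℂ)) ^ 2 + (α₁ : ℂ) * (Complex.I * (ω : ℂ)) + (α₀ : ℂ)
      = -z := by
    rw [hz]
    push_cast
    ring_nf
    rw [Complex.I_sq]
    ring
  unfold chi
  rw [e₁, e₂, Complex.exp_add, Complex.exp_add]
  linear_combination hneg + Complex.exp ((z.arg : ℂ) * Complex.I) * key + hzz
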